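/- arXiv:2212.09673 — 2 statements merged into one kernel-verified Lean document; each statement's English description precedes it below -/
import Mathlib

section
/- Let t₁, t₂ ∈ ℝ² be unit vectors and let M = (t₁, t₂) be the 2×2 matrix with columns t₁ and t₂. Let θ satisfy cos θ = ⟨t₁, t₂⟩, and assume sin θ ≠ 0 (so M is invertible). Then the spectral condition number cond₂(M) = ‖M⁻¹‖₂‖M‖₂ satisfies cond₂(M) ≤ 2/|sin θ|. -/
open Real Matrix

lemma euclid_apply_eq (A : Matrix (Fin 2) (Fin 2) ℝ) (x : EuclideanSpace ℝ (Fin 2)) (i : Fin 2) :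
    (Matrix.toEuclideanCLM (𝕜 := ℝ) A x) i = A i 0 * x 0 + A i 1 * x 1 := by
  have h := congrFun (Matrix.ofLp_toEuclideanCLM (𝕜 := ℝ) A x) i
  simpa [Matrix.toLin'_apply, Matrix.mulVec, dotProduct, Fin.sum_univ_two] using h

lemma opNorm_le_of_entries (A : Matrix (Fin 2) (Fin 2) ℝ) (c : ℝ) (hc : 0 ≤ c)
    (h : A 0 0 ^ 2 + A 0 1 ^ 2 + A 1 0 ^ 2 + A 1 1 ^ 2 ≤ c ^ 2) :
    ‖Matrix.toEuclideanCLM (𝕜 := ℝ) A‖ ≤ c := by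
  apply ContinuousLinearMap.opNorm_le_bound _ hc
  intro x
  have hx : ‖x‖ = Real.sqrt (x 0 ^ 2 + x 1 ^ 2) := by
    rw [EuclideanSpace.norm_eq]
    simp [Fin.sum_univ_two, sq_abs, sq]
  have hAx : ‖Matrix.toEuclideanCLM (𝕜 := ℝ) A x‖ =
      Real.sqrt ((A 0 0 * x 0 + A 0 1 * x 1) ^ 2 + (A 1 0 * x 0 + A 1 1 * x 1) ^ 2) := by
    rw [EuclideanSpace.norm_eq]
    simp [Fin.sum_univ_two, sq_abs, euclid_apply_eq, sq]
  rw [hAx, hx]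
  rw [show c * Real.sqrt (x 0 ^ 2 + x 1 ^ 2) = Real.sqrt (c ^ 2 * (x 0 ^ 2 + x 1 ^ 2)) by
    rw [Real.sqrt_mul (sq_nonneg c), Real.sqrt_sq hc]]
  apply Real.sqrt_le_sqrt
  nlinarith [sq_nonneg (A 0 0 * x 1 - A 0 1 * x 0), sq_nonneg (A 1 0 * x 1 - A 1 1 * x 0),
    sq_nonneg (x 0), sq_nonneg (x 1)]

theorem stmt2 (t₁ t₂ : EuclideanSpace ℝ (Fin 2)) (ht₁ : ‖t₁‖ = 1) (ht₂ : ‖t₂‖ = 1)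
    (θ : ℝ) (hθ : Real.cos θ = inner ℝ t₁ t₂) (hsin : Real.sin θ ≠ 0)
    (M : Matrix (Fin 2) (Fin 2) ℝ)
    (hM : ∀ i, M i 0 = t₁ i ∧ M i 1 = t₂ i) :
    ‖Matrix.toEuclideanCLM (𝕜 := ℝ) M⁻¹‖ * ‖Matrix.toEuclideanCLM (𝕜 := ℝ) M‖ ≤
      2 / |Real.sin θ| := by
  set s := Real.sin θ
  have hs : |s| > 0 := abs_pos.mpr hsin
  -- sums of squares of the two columns
  have h1 : t₁ 0 ^ 2 + t₁ 1 ^ 2 = 1 := by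
    have := congrArg (· ^ 2) (EuclideanSpace.norm_eq t₁ ▸ ht₁)
    simp only [Fin.sum_univ_two, Real.norm_eq_abs, sq_abs] at this
    rw [Real.sq_sqrt (by positivity)] at this
    linarith [this]
  have h2 : t₂ 0 ^ 2 + t₂ 1 ^ 2 = 1 := by
    have := congrArg (· ^ 2) (EuclideanSpace.norm_eq t₂ ▸ ht₂)
    simp only [Fin.sum_univ_two, Real.norm_eq_abs, sq_abs] at this
    rw [Real.sq_sqrt (by positivity)] at this
    linarith [this]
  have hcos : Real.cos θ = t₁ 0 * t₂ 0 + t₁ 1 * t₂ 1 := by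
    rw [hθ]
    simp [PiLp.inner_apply, Fin.sum_univ_two, mul_comm]
  have hdet : M.det = t₁ 0 * t₂ 1 - t₂ 0 * t₁ 1 := by
    rw [Matrix.det_fin_two, (hM 0).1, (hM 0).2, (hM 1).1, (hM 1).2]
  have hdetsq : M.det ^ 2 = s ^ 2 := by
    have hpyth : s ^ 2 + Real.cos θ ^ 2 = 1 := Real.sin_sq_add_cos_sq θ
    have hc2 : Real.cos θ ^ 2 = (t₁ 0 * t₂ 0 + t₁ 1 * t₂ 1) ^ 2 := by rw [hcos]
    have key : (t₁ 0 * t₂ 1 - t₂ 0 * t₁ 1) ^ 2 + (t₁ 0 * t₂ 0 + t₁ 1 * t₂ 1) ^ 2 =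
        (t₁ 0 ^ 2 + t₁ 1 ^ 2) * (t₂ 0 ^ 2 + t₂ 1 ^ 2) := by ring
    have hmul : (t₁ 0 ^ 2 + t₁ 1 ^ 2) * (t₂ 0 ^ 2 + t₂ 1 ^ 2) = 1 := by
      rw [h1, h2]; norm_num
    rw [hdet]
    linarith [key, hc2, hpyth, hmul]
  have hdet0 : M.det ≠ 0 := by
    intro h
    apply hsin
    have hz : s ^ 2 = 0 := by rw [← hdetsq, h]; ring
    exact pow_eq_zero_iff (by norm_num : (2:ℕ) ≠ 0) |>.mp hz
  -- norm of M
  have hMnorm : ‖Matrix.toEuclideanCLM (𝕜 := ℝ) M‖ ≤ Real.sqrt 2 := by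
    apply opNorm_le_of_entries _ _ (Real.sqrt_nonneg 2)
    rw [Real.sq_sqrt (by norm_num)]
    rw [(hM 0).1, (hM 0).2, (hM 1).1, (hM 1).2]
    nlinarith [h1, h2]
  -- norm of M⁻¹
  have hinv : ∀ i j, M⁻¹ i j = (M.det)⁻¹ * M.adjugate i j := by
    intro i j
    rw [Matrix.inv_def, Ring.inverse_eq_inv']
    simp [Matrix.smul_apply]
  have hadj : M.adjugate = !![M 1 1, -M 0 1; -M 1 0, M 0 0] := Matrix.adjugate_fin_two M
  have hMinvnorm : ‖Matrix.toEuclideanCLM (𝕜 := ℝ) M⁻¹‖ ≤ Real.sqrt 2 / |s| := by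
    apply opNorm_le_of_entries _ _ (by positivity)
    rw [div_pow, Real.sq_sqrt (by norm_num), sq_abs]
    rw [hinv 0 0, hinv 0 1, hinv 1 0, hinv 1 1, hadj]
    have h2' : (M 1 1) ^ 2 + (M 0 1) ^ 2 + (M 1 0) ^ 2 + (M 0 0) ^ 2 = 2 := by
      rw [(hM 0).1, (hM 0).2, (hM 1).1, (hM 1).2]; nlinarith [h1, h2]
    have hd2 : (M.det)⁻¹ ^ 2 = (s ^ 2)⁻¹ := by
      rw [inv_pow, hdetsq]
    have e00 : (!![M 1 1, -M 0 1; -M 1 0, M 0 0] : Matrix (Fin 2) (Fin 2) ℝ) 0 0 = M 1 1 := rfl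
    have e01 : (!![M 1 1, -M 0 1; -M 1 0, M 0 0] : Matrix (Fin 2) (Fin 2) ℝ) 0 1 = -M 0 1 := rfl
    have e10 : (!![M 1 1, -M 0 1; -M 1 0, M 0 0] : Matrix (Fin 2) (Fin 2) ℝ) 1 0 = -M 1 0 := rfl
    have e11 : (!![M 1 1, -M 0 1; -M 1 0, M 0 0] : Matrix (Fin 2) (Fin 2) ℝ) 1 1 = M 0 0 := rfl
    rw [e00, e01, e10, e11]
    have : (M.det⁻¹ * M 1 1) ^ 2 + (M.det⁻¹ * -M 0 1) ^ 2 + (M.det⁻¹ * -M 1 0) ^ 2 +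
        (M.det⁻¹ * M 0 0) ^ 2 = (M.det)⁻¹ ^ 2 *
        ((M 1 1) ^ 2 + (M 0 1) ^ 2 + (M 1 0) ^ 2 + (M 0 0) ^ 2) := by ring
    rw [this, h2', hd2]
    rw [inv_mul_eq_div]
  calc ‖Matrix.toEuclideanCLM (𝕜 := ℝ) M⁻¹‖ * ‖Matrix.toEuclideanCLM (𝕜 := ℝ) M‖
      ≤ (Real.sqrt 2 / |s|) * Real.sqrt 2 :=
        mul_le_mul hMinvnorm hMnorm (norm_nonneg _) (by positivity)
    _ = 2 / |s| := by
        rw [div_mul_eq_mul_div, Real.mul_self_sqrt (by norm_num)]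
end

section
/- Let K ⊂ ℝ² be a (nondegenerate) triangle with vertex z and let λ_z : K → ℝ be the barycentric coordinate associated to z (the affine function with λ_z(z) = 1 and λ_z = 0 on the opposite edge). Then ∫_K P_k^{(0,2)}(1 − 2λ_z(x)) dx = (−1)^k |K| / binom(k+2,2), where |K| is the area of K. -/
open MeasureTheory

/-- The Jacobi polynomial `P_k^{(0,2)}`, normalized by `P_k^{(0,2)}(1) = 1`. -/
noncomputable def jacobiP02 (k : ℕ) (x : ℝ) : ℝ :=
  ∑ s ∈ Finset.range (k + 1),
    (k.choose (k - s) : ℝ) * ((k + 2).choose s : ℝ) *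
      ((x - 1) / 2) ^ s * ((x + 1) / 2) ^ (k - s)

lemma beta_nat (s m : ℕ) : ∫ x in (0:ℝ)..1, x ^ s * (1 - x) ^ m
    = (s.factorial * m.factorial : ℝ) / (s + m + 1).factorial := by
  induction m generalizing s with
  | zero =>
    simp only [pow_zero, mul_one, integral_pow, Nat.factorial_zero, Nat.cast_one,
      Nat.factorial_succ]
    rw [one_pow, zero_pow (by omega), sub_zero]
    have : ((s:ℝ)+1) ≠ 0 := by positivity
    have h2 : ((s.factorial : ℝ)) ≠ 0 := by positivity
    push_cast
    field_simp
  | succ m ih =>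
    have flip : ∫ x in (0:ℝ)..1, x ^ s * (1 - x) ^ (m+1)
        = ∫ x in (0:ℝ)..1, (1 - x) ^ (m+1) * x ^ s := by
      apply intervalIntegral.integral_congr; intro x _; ring
    have key : ∫ x in (0:ℝ)..1, (1-x)^(m+1) * x ^ s
        = ((1:ℝ)-1)^(m+1) * (1^(s+1)/(s+1)) - ((1:ℝ)-0)^(m+1) * (0^(s+1)/(s+1))
          - ∫ x in (0:ℝ)..1, (-(((m:ℝ)+1) * (1 - x) ^ m)) * (x^(s+1)/((s:ℝ)+1)) := by
      apply intervalIntegral.integral_mul_deriv_eq_deriv_mul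
        (u := fun x => (1-x)^(m+1)) (u' := fun x => -(((m:ℝ)+1) * (1 - x) ^ m))
        (v := fun x => x^(s+1)/((s:ℝ)+1)) (v' := fun x => x^s)
      · intro x _
        have : HasDerivAt (fun x : ℝ => (1-x)^(m+1))
            ((↑(m+1) : ℝ) * (1 - x) ^ (m+1-1) * -1) x :=
          (((hasDerivAt_id x).const_sub 1).pow (m+1))
        refine this.congr_deriv ?_
        push_cast; ring
      · intro x _
        have : HasDerivAt (fun x : ℝ => x^(s+1)/((s:ℝ)+1))
            ((↑(s+1):ℝ) * x ^ (s+1-1) / ((s:ℝ)+1)) x :=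
          (hasDerivAt_pow (s+1) x).div_const _
        have hs1 : ((s:ℝ)+1) ≠ 0 := by positivity
        refine this.congr_deriv ?_
        push_cast
        field_simp
      · apply Continuous.intervalIntegrable; continuity
      · apply Continuous.intervalIntegrable; continuity
    have step : ∫ x in (0:ℝ)..1, (-(((m:ℝ)+1) * (1 - x) ^ m)) * (x^(s+1)/((s:ℝ)+1))
        = (-(((m:ℝ)+1)/((s:ℝ)+1))) * ∫ x in (0:ℝ)..1, x^(s+1) * (1-x)^m := by
      rw [← intervalIntegral.integral_const_mul]
      apply intervalIntegral.integral_congr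
      intro x _
      have hs1 : ((s:ℝ)+1) ≠ 0 := by positivity
      field_simp
    rw [flip, key, step, ih (s+1)]
    rw [zero_pow (by omega), one_pow]
    have e1 : (s + 1 + m + 1) = (s + (m+1) + 1) := by omega
    rw [e1]
    have hs1 : ((s:ℝ)+1) ≠ 0 := by positivity
    have h2 : ((s + (m+1) + 1).factorial : ℝ) ≠ 0 := by positivity
    rw [Nat.factorial_succ (s), Nat.factorial_succ m]
    push_cast
    field_simp
    ring

lemma sum_step (k : ℕ) : ∑ j ∈ Finset.range (k+1), (-1:ℝ)^j * (k.choose j : ℝ) / ((j:ℝ)+2)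
    = 1/(((k:ℝ)+1)*((k:ℝ)+2)) := by
  have h := beta_nat 1 k
  have expand : ∫ x in (0:ℝ)..1, x ^ 1 * (1 - x) ^ k
      = ∑ j ∈ Finset.range (k+1), ∫ x in (0:ℝ)..1, (-1:ℝ)^j * (k.choose j : ℝ) * x^(j+1) := by
    rw [← intervalIntegral.integral_finset_sum]
    · apply intervalIntegral.integral_congr
      intro x _
      show x ^ 1 * (1 - x) ^ k = _
      have h1 : (1 - x) ^ k = ((-x) + 1)^k := by ring_nf
      rw [pow_one, h1, add_pow, Finset.mul_sum]
      apply Finset.sum_congr rfl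
      intro j hj
      rw [neg_pow]
      ring
    · intro j _
      apply Continuous.intervalIntegrable; continuity
  rw [expand] at h
  have step : ∀ j ∈ Finset.range (k+1),
      (∫ x in (0:ℝ)..1, (-1:ℝ)^j * (k.choose j : ℝ) * x^(j+1))
      = (-1:ℝ)^j * (k.choose j : ℝ) / ((j:ℝ)+2) := by
    intro j _
    rw [intervalIntegral.integral_const_mul, integral_pow]
    rw [one_pow, zero_pow (by omega), sub_zero]
    push_cast
    ring
  rw [Finset.sum_congr rfl step] at h
  rw [h]
  have h1 : (1+k+1) = k+2 := by omega
  rw [h1, Nat.factorial_one, Nat.factorial_succ (k+1), Nat.factorial_succ k]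
  have hk : ((k.factorial : ℝ)) ≠ 0 := by positivity
  have hk1 : ((k:ℝ)+1) ≠ 0 := by positivity
  have hk2 : ((k:ℝ)+2) ≠ 0 := by positivity
  push_cast
  field_simp
  ring

lemma oneD (k : ℕ) : ∫ t in (0:ℝ)..1, (1-t) * jacobiP02 k (1 - 2*t)
    = (-1:ℝ)^k / (((k:ℝ)+1)*((k:ℝ)+2)) := by
  have expand : ∫ t in (0:ℝ)..1, (1-t) * jacobiP02 k (1 - 2*t)
      = ∑ s ∈ Finset.range (k+1), ∫ t in (0:ℝ)..1,
          ((k.choose (k-s) : ℝ) * ((k+2).choose s : ℝ) * (-1:ℝ)^s) *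
            (t ^ s * (1-t) ^ ((k-s)+1)) := by
    rw [← intervalIntegral.integral_finset_sum]
    · apply intervalIntegral.integral_congr
      intro t _
      show (1-t) * jacobiP02 k (1 - 2*t) = _
      rw [jacobiP02, Finset.mul_sum]
      apply Finset.sum_congr rfl
      intro i hi
      have e1 : ((1 - 2*t) - 1)/2 = -t := by ring
      have e2 : ((1 - 2*t) + 1)/2 = 1 - t := by ring
      rw [e1, e2, neg_pow, pow_succ]
      ring
    · intro i _
      apply Continuous.intervalIntegrable; continuity
  rw [expand]
  have step : ∀ s ∈ Finset.range (k+1),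
      (∫ t in (0:ℝ)..1, ((k.choose (k-s) : ℝ) * ((k+2).choose s : ℝ) * (-1:ℝ)^s) *
          (t ^ s * (1-t) ^ ((k-s)+1)))
      = (-1:ℝ)^s * (k.choose s : ℝ) / (((k-s : ℕ):ℝ) + 2) := by
    intro s hs
    have hsk : s ≤ k := by simpa [Nat.lt_succ_iff] using Finset.mem_range.mp hs
    obtain ⟨m, rfl⟩ : ∃ m, k = s + m := ⟨k - s, by omega⟩
    simp only [Nat.add_sub_cancel_left]
    rw [intervalIntegral.integral_const_mul, beta_nat s (m+1)]
    have e3 : s + (m+1) + 1 = (s+m) + 2 := by omega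
    rw [e3]
    have hcs : (s+m).choose m = (s+m).choose s := by
      rw [← Nat.choose_symm (by omega : s ≤ s + m)]
      congr 1
      omega
    have hnat : (s+m+2).choose s * s.factorial * (m+2).factorial = (s+m+2).factorial := by
      have h := Nat.choose_mul_factorial_mul_factorial (n := s+m+2) (k := s) (by omega)
      have e4 : (s+m+2) - s = m+2 := by omega
      rwa [e4] at h
    have hR : ((s+m+2).choose s : ℝ) * s.factorial * (m+2).factorial = (s+m+2).factorial := by
      exact_mod_cast congrArg (Nat.cast : ℕ → ℝ) hnat
    rw [Nat.factorial_succ (m+1)] at hR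
    have hf2 : (((s+m)+2).factorial : ℝ) ≠ 0 := by positivity
    have hd : ((m:ℝ)+2) ≠ 0 := by positivity
    rw [hcs]
    push_cast at hR ⊢
    field_simp
    linear_combination (((s+m).choose s : ℝ)) * hR
  rw [Finset.sum_congr rfl step]
  rw [← Finset.sum_range_reflect]
  have step2 : ∀ j ∈ Finset.range (k+1),
      (-1:ℝ)^(k+1-1-j) * (k.choose (k+1-1-j) : ℝ) / (((k-(k+1-1-j) : ℕ):ℝ) + 2)
      = (-1:ℝ)^k * ((-1:ℝ)^j * (k.choose j : ℝ) / ((j:ℝ)+2)) := by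
    intro j hj
    have hjk : j ≤ k := by simpa [Nat.lt_succ_iff] using Finset.mem_range.mp hj
    have e0 : k+1-1-j = k-j := by omega
    have e6 : k - (k - j) = j := by omega
    have e7 : k.choose (k-j) = k.choose j := Nat.choose_symm hjk
    have e8 : (-1:ℝ)^(k-j) = (-1)^k * (-1)^j := by
      have h1 : (-1:ℝ)^(k-j) * (-1:ℝ)^j = (-1)^k := by
        rw [← pow_add, Nat.sub_add_cancel hjk]
      have h2 : (-1:ℝ)^j * (-1:ℝ)^j = 1 := by
        rw [← pow_add]; exact Even.neg_one_pow ⟨j, rfl⟩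
      calc (-1:ℝ)^(k-j) = (-1)^(k-j) * ((-1)^j * (-1)^j) := by rw [h2, mul_one]
        _ = (-1)^k * (-1)^j := by rw [← mul_assoc, h1]
    rw [e0, e6, e7, e8]
    ring
  rw [Finset.sum_congr rfl step2, ← Finset.mul_sum, sum_step]
  ring

noncomputable def ee0 : EuclideanSpace ℝ (Fin 2) := EuclideanSpace.single 0 1
noncomputable def ee1 : EuclideanSpace ℝ (Fin 2) := EuclideanSpace.single 1 1

lemma simplex_eq : convexHull ℝ ({0, ee0, ee1} : Set (EuclideanSpace ℝ (Fin 2)))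
    = {p : EuclideanSpace ℝ (Fin 2) | 0 ≤ p 0 ∧ 0 ≤ p 1 ∧ p 0 + p 1 ≤ 1} := by
  apply le_antisymm
  · apply convexHull_min
    · intro x hx
      rcases hx with h | h | h <;> subst h <;>
        simp [ee0, ee1, EuclideanSpace.single_apply]
    · have l0 : IsLinearMap ℝ (fun p : EuclideanSpace ℝ (Fin 2) => p 0) :=
        ⟨fun a b => rfl, fun c a => rfl⟩
      have l1 : IsLinearMap ℝ (fun p : EuclideanSpace ℝ (Fin 2) => p 1) :=
        ⟨fun a b => rfl, fun c a => rfl⟩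
      have l01 : IsLinearMap ℝ (fun p : EuclideanSpace ℝ (Fin 2) => p 0 + p 1) :=
        ⟨fun a b => by show (a+b) 0 + (a+b) 1 = _; simp [PiLp.add_apply]; ring,
         fun c a => by show (c • a) 0 + (c • a) 1 = _; simp [PiLp.smul_apply]; ring⟩
      have : {p : EuclideanSpace ℝ (Fin 2) | 0 ≤ p 0 ∧ 0 ≤ p 1 ∧ p 0 + p 1 ≤ 1}
          = {p : EuclideanSpace ℝ (Fin 2) | 0 ≤ p 0} ∩
            ({p : EuclideanSpace ℝ (Fin 2) | 0 ≤ p 1} ∩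
             {p : EuclideanSpace ℝ (Fin 2) | p 0 + p 1 ≤ 1}) := by
        ext p; simp [and_assoc]
      rw [this]
      exact (convex_halfSpace_ge l0 0).inter
        ((convex_halfSpace_ge l1 0).inter (convex_halfSpace_le l01 1))
  · intro p hp
    obtain ⟨h0, h1, hs⟩ := hp
    have key : p = ∑ i : Fin 3, (![1 - p 0 - p 1, p 0, p 1] : Fin 3 → ℝ) i •
        (![0, ee0, ee1] : Fin 3 → EuclideanSpace ℝ (Fin 2)) i := by
      rw [Fin.sum_univ_three]
      ext j
      fin_cases j <;>
        simp [ee0, ee1, EuclideanSpace.single_apply, PiLp.add_apply, PiLp.smul_apply] <;> ring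
    rw [key]
    apply (convex_convexHull ℝ ({0, ee0, ee1} : Set (EuclideanSpace ℝ (Fin 2)))).sum_mem
    · intro i _
      fin_cases i <;> simp <;> linarith
    · rw [Fin.sum_univ_three]; simp; ring
    · intro i _
      apply subset_convexHull
      fin_cases i <;> simp

lemma simplex_integral (g : ℝ → ℝ) (hg : Continuous g) :
    ∫ p in {p : EuclideanSpace ℝ (Fin 2) | 0 ≤ p 0 ∧ 0 ≤ p 1 ∧ p 0 + p 1 ≤ 1}, g (p 0)
      = ∫ t in (0:ℝ)..1, (1-t) * g t := by
  set S' : Set (ℝ×ℝ) := {q | 0 ≤ q.1 ∧ 0 ≤ q.2 ∧ q.1 + q.2 ≤ 1} with hS'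
  have hclosed : IsClosed S' := by
    have : S' = {q : ℝ×ℝ | 0 ≤ q.1} ∩ ({q : ℝ×ℝ | 0 ≤ q.2} ∩ {q : ℝ×ℝ | q.1 + q.2 ≤ 1}) := by
      ext q; simp [hS', and_assoc]
    rw [this]
    exact (isClosed_le continuous_const continuous_fst).inter
      ((isClosed_le continuous_const continuous_snd).inter
        (isClosed_le (continuous_fst.add continuous_snd) continuous_const))
  have hsub : S' ⊆ Set.Icc ((0:ℝ),(0:ℝ)) (1,1) := by
    intro q hq
    obtain ⟨h1, h2, h3⟩ := hq
    constructor <;> constructor <;> simp <;> linarith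
  have hcpt : IsCompact S' := isCompact_Icc.of_isClosed_subset hclosed hsub
  have hmeas : MeasurableSet S' := hclosed.measurableSet
  -- transfer from EuclideanSpace to ℝ × ℝ
  set φ : EuclideanSpace ℝ (Fin 2) ≃ᵐ ℝ × ℝ :=
    (MeasurableEquiv.toLp 2 (Fin 2 → ℝ)).symm.trans MeasurableEquiv.finTwoArrow with hφdef
  have hφ : MeasurePreserving φ volume volume :=
    (volume_preserving_finTwoArrow ℝ).comp (EuclideanSpace.volume_preserving_symm_measurableEquiv_toLp (Fin 2))
  have hφapp : ∀ p : EuclideanSpace ℝ (Fin 2), φ p = (p 0, p 1) := by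
    intro p
    rfl
  have hpre : {p : EuclideanSpace ℝ (Fin 2) | 0 ≤ p 0 ∧ 0 ≤ p 1 ∧ p 0 + p 1 ≤ 1} = φ ⁻¹' S' := by
    ext p; simp [hS', Set.mem_preimage, hφapp p]
  have htrans := hφ.setIntegral_preimage_emb φ.measurableEmbedding (fun q => g q.1) S'
  rw [hpre]
  have : ∀ p, g ((φ p).1) = g (p 0) := fun p => by rw [hφapp]
  rw [show (fun p : EuclideanSpace ℝ (Fin 2) => g (p 0))
      = fun p => g ((φ p).1) from funext fun p => (this p).symm] at *
  rw [htrans]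
  -- Fubini on ℝ × ℝ
  have hint : Integrable (S'.indicator fun q : ℝ×ℝ => g q.1) volume := by
    rw [integrable_indicator_iff hmeas]
    exact (hg.comp continuous_fst).continuousOn.integrableOn_compact hcpt
  rw [← integral_indicator hmeas]
  rw [Measure.volume_eq_prod] at hint ⊢
  rw [integral_prod _ hint]
  have inner_eq : ∀ x : ℝ, (∫ y : ℝ, S'.indicator (fun q : ℝ×ℝ => g q.1) (x, y))
      = (Set.Icc (0:ℝ) 1).indicator (fun x => (1-x) * g x) x := by
    intro x
    by_cases hx : 0 ≤ x ∧ x ≤ 1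
    · have : (fun y : ℝ => S'.indicator (fun q : ℝ×ℝ => g q.1) (x, y))
          = (Set.Icc (0:ℝ) (1-x)).indicator (fun _ => g x) := by
        funext y
        by_cases hy : 0 ≤ y ∧ y ≤ 1 - x
        · rw [Set.indicator_of_mem (by exact ⟨hx.1, hy.1, by linarith [hy.2]⟩),
            Set.indicator_of_mem (by exact ⟨hy.1, hy.2⟩)]
        · rw [Set.indicator_of_notMem, Set.indicator_of_notMem]
          · intro hmem; exact hy ⟨hmem.1, hmem.2⟩
          · intro hmem; exact hy ⟨hmem.2.1, by linarith [hmem.2.2]⟩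
      rw [this, integral_indicator_const _ measurableSet_Icc]
      rw [Real.volume_real_Icc, max_eq_left (by linarith [hx.2])]
      simp only [smul_eq_mul]
      rw [Set.indicator_of_mem (Set.mem_Icc.mpr hx)]
      ring
    · have h0 : (fun y : ℝ => S'.indicator (fun q : ℝ×ℝ => g q.1) (x, y)) = fun _ => 0 := by
        funext y
        apply Set.indicator_of_notMem
        intro hmem
        obtain ⟨a1, a2, a3⟩ := hmem
        exact hx ⟨a1, by linarith⟩
      rw [h0, integral_zero, Set.indicator_of_notMem]
      intro hmem; exact hx ⟨hmem.1, hmem.2⟩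
  rw [show (fun x : ℝ => ∫ y : ℝ, S'.indicator (fun q : ℝ×ℝ => g q.1) (x, y))
      = fun x => (Set.Icc (0:ℝ) 1).indicator (fun x => (1-x) * g x) x from funext inner_eq]
  rw [integral_indicator measurableSet_Icc]
  rw [MeasureTheory.integral_Icc_eq_integral_Ioc]
  rw [← intervalIntegral.integral_of_le (by norm_num : (0:ℝ) ≤ 1)]

lemma choose_two_real (k : ℕ) : (((k+2).choose 2 : ℕ) : ℝ) = ((k:ℝ)+1)*((k:ℝ)+2)/2 := by
  have hC2 : (k+2).choose 2 * 2 = (k+2)*(k+1) := by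
    rw [Nat.choose_two_right]
    have e1 : (k+2) - 1 = k+1 := by omega
    rw [e1]
    obtain ⟨c, hc⟩ := Nat.even_mul_succ_self (k+1)
    have e : (k+2)*(k+1) = 2 * c := by nlinarith [hc]
    rw [e]
    omega
  have hC : ((k+2).choose 2 : ℝ) * 2 = ((k:ℝ)+2)*((k:ℝ)+1) := by exact_mod_cast hC2
  linarith

theorem stmt11 (k : ℕ) (z A B : EuclideanSpace ℝ (Fin 2))
    (hind : AffineIndependent ℝ ![z, A, B])
    (K : Set (EuclideanSpace ℝ (Fin 2))) (hK : K = convexHull ℝ {z, A, B})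
    (lam : EuclideanSpace ℝ (Fin 2) →ᵃ[ℝ] ℝ)
    (hz : lam z = 1) (hA : lam A = 0) (hB : lam B = 0) :
    ∫ x in K, jacobiP02 k (1 - 2 * lam x) =
      (-1 : ℝ) ^ k * (volume K).toReal / ((k + 2).choose 2 : ℝ) := by
  classical
  have htop : affineSpan ℝ (Set.range ![z, A, B]) = ⊤ := by
    rw [hind.affineSpan_eq_top_iff_card_eq_finrank_add_one]
    simp [finrank_euclideanSpace_fin]
  set b : AffineBasis (Fin 3) ℝ (EuclideanSpace ℝ (Fin 2)) := ⟨![z,A,B], hind, htop⟩ with hb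
  set mu : EuclideanSpace ℝ (Fin 2) →ᵃ[ℝ] ℝ := b.coord 2 with hmudef
  have hbz : b 0 = z := rfl
  have hbA : b 1 = A := rfl
  have hbB : b 2 = B := rfl
  have hmuz : mu z = 0 := by rw [hmudef, ← hbz, AffineBasis.coord_apply]; simp
  have hmuA : mu A = 0 := by rw [hmudef, ← hbA, AffineBasis.coord_apply]; simp
  have hmuB : mu B = 1 := by rw [hmudef, ← hbB, AffineBasis.coord_apply]; simp
  set u : EuclideanSpace ℝ (Fin 2) := z - A with hu
  set v : EuclideanSpace ℝ (Fin 2) := B - A with hv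
  set M : EuclideanSpace ℝ (Fin 2) →L[ℝ] EuclideanSpace ℝ (Fin 2) :=
    (EuclideanSpace.proj (0 : Fin 2)).smulRight u + (EuclideanSpace.proj (1 : Fin 2)).smulRight v
    with hM
  have hMapp : ∀ p : EuclideanSpace ℝ (Fin 2), M p = p 0 • u + p 1 • v := fun p => rfl
  set T : EuclideanSpace ℝ (Fin 2) → EuclideanSpace ℝ (Fin 2) := fun p => A + M p with hT
  have hlamlin_u : lam.linear u = 1 := by
    have := lam.linearMap_vsub z A
    simp only [vsub_eq_sub] at this
    rw [hu, this, hz, hA]; norm_num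
  have hlamlin_v : lam.linear v = 0 := by
    have := lam.linearMap_vsub B A
    simp only [vsub_eq_sub] at this
    rw [hv, this, hB, hA]; norm_num
  have hmulin_u : mu.linear u = 0 := by
    have := mu.linearMap_vsub z A
    simp only [vsub_eq_sub] at this
    rw [hu, this, hmuz, hmuA]; norm_num
  have hmulin_v : mu.linear v = 1 := by
    have := mu.linearMap_vsub B A
    simp only [vsub_eq_sub] at this
    rw [hv, this, hmuB, hmuA]; norm_num
  have hlamT : ∀ p : EuclideanSpace ℝ (Fin 2), lam (T p) = p 0 := by
    intro p
    have : T p = M p +ᵥ A := by rw [hT]; simp [vadd_eq_add]; abel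
    rw [this, AffineMap.map_vadd, hMapp]
    simp [vadd_eq_add, map_add, _root_.map_smul, hlamlin_u, hlamlin_v, hA]
  have hmuT : ∀ p : EuclideanSpace ℝ (Fin 2), mu (T p) = p 1 := by
    intro p
    have : T p = M p +ᵥ A := by rw [hT]; simp [vadd_eq_add]; abel
    rw [this, AffineMap.map_vadd, hMapp]
    simp [vadd_eq_add, map_add, _root_.map_smul, hmulin_u, hmulin_v, hmuA]
  have hinj : Function.Injective T := by
    intro p q hpq
    have h0 : p 0 = q 0 := by rw [← hlamT p, ← hlamT q, hpq]
    have h1 : p 1 = q 1 := by rw [← hmuT p, ← hmuT q, hpq]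
    ext j
    fin_cases j
    · exact h0
    · exact h1
  have hdet : M.det ≠ 0 := by
    intro h0
    have hlt := LinearMap.bot_lt_ker_of_det_eq_zero (R := ℝ) h0
    rw [bot_lt_iff_ne_bot] at hlt
    apply hlt
    rw [LinearMap.ker_eq_bot]
    intro p q hpq
    apply hinj
    show A + M p = A + M q
    have : M p = M q := hpq
    rw [this]
  set Δ : Set (EuclideanSpace ℝ (Fin 2)) := convexHull ℝ ({0, ee0, ee1} : Set _) with hΔ
  have hΔmeas : MeasurableSet Δ :=
    ((Set.toFinite ({0, ee0, ee1} : Set _)).isCompact_convexHull ℝ).measurableSet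
  have hTaff : ∃ Ta : EuclideanSpace ℝ (Fin 2) →ᵃ[ℝ] EuclideanSpace ℝ (Fin 2), ⇑Ta = T := by
    refine ⟨AffineMap.mk' T (M : EuclideanSpace ℝ (Fin 2) →ₗ[ℝ] EuclideanSpace ℝ (Fin 2)) 0 ?_, rfl⟩
    intro p
    show T p = M (p - 0) + T 0
    rw [hT]
    simp only [sub_zero]
    simp [map_zero]
    abel
  obtain ⟨Ta, hTa⟩ := hTaff
  have hT0 : T 0 = A := by rw [hT]; simp [map_zero]
  have hTee0 : T ee0 = z := by
    rw [hT]
    show A + M ee0 = z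
    rw [hMapp]
    have h00 : (ee0 : EuclideanSpace ℝ (Fin 2)) 0 = 1 := by
      simp [ee0, EuclideanSpace.single_apply]
    have h01 : (ee0 : EuclideanSpace ℝ (Fin 2)) 1 = 0 := by
      simp [ee0, EuclideanSpace.single_apply]
    rw [h00, h01, one_smul, zero_smul, add_zero, hu]
    abel
  have hTee1 : T ee1 = B := by
    rw [hT]
    show A + M ee1 = B
    rw [hMapp]
    have h10 : (ee1 : EuclideanSpace ℝ (Fin 2)) 0 = 0 := by
      simp [ee1, EuclideanSpace.single_apply]
    have h11 : (ee1 : EuclideanSpace ℝ (Fin 2)) 1 = 1 := by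
      simp [ee1, EuclideanSpace.single_apply]
    rw [h10, h11, one_smul, zero_smul, zero_add, hv]
    abel
  have himg : T '' Δ = K := by
    rw [hΔ, ← hTa, Ta.image_convexHull, hTa]
    rw [Set.image_insert_eq, Set.image_insert_eq, Set.image_singleton]
    rw [hT0, hTee0, hTee1, hK]
    rw [Set.insert_comm]
  have hTderiv : ∀ x : EuclideanSpace ℝ (Fin 2), HasFDerivAt T M x := by
    intro x
    exact (M.hasFDerivAt).const_add A
  have hCOV : ∀ g : EuclideanSpace ℝ (Fin 2) → ℝ,
      ∫ x in K, g x = |M.det| * ∫ p in Δ, g (T p) := by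
    intro g
    rw [← himg]
    rw [integral_image_eq_integral_abs_det_fderiv_smul volume hΔmeas
      (fun x _ => (hTderiv x).hasFDerivWithinAt) (hinj.injOn) g]
    rw [integral_smul, smul_eq_mul]
  have hgcont : Continuous fun t : ℝ => jacobiP02 k (1 - 2*t) := by
    unfold jacobiP02
    apply continuous_finset_sum
    intro i _
    fun_prop
  have hmain : ∫ x in K, jacobiP02 k (1 - 2 * lam x)
      = |M.det| * ((-1:ℝ)^k / (((k:ℝ)+1)*((k:ℝ)+2))) := by
    rw [hCOV (fun x => jacobiP02 k (1 - 2 * lam x))]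
    congr 1
    have : (fun p : EuclideanSpace ℝ (Fin 2) => jacobiP02 k (1 - 2 * lam (T p)))
        = fun p => jacobiP02 k (1 - 2 * p 0) := by
      funext p; rw [hlamT p]
    rw [this, hΔ, simplex_eq]
    rw [simplex_integral (fun t => jacobiP02 k (1 - 2*t)) (by simpa [mul_comm] using hgcont)]
    exact oneD k
  have hvolΔ : ∫ p in Δ, (1:ℝ) = 1/2 := by
    rw [hΔ, simplex_eq]
    rw [simplex_integral (fun _ => (1:ℝ)) continuous_const]
    have : ∫ t in (0:ℝ)..1, (1-t) * 1 = ∫ t in (0:ℝ)..1, (1 - t) := by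
      simp
    rw [this]
    have h := intervalIntegral.integral_comp_sub_left (a := (0:ℝ)) (b := 1) (fun x : ℝ => x) 1
    rw [integral_id] at h
    norm_num at h
    rw [h]
  have hvolK : (volume K).toReal = |M.det| * (1/2) := by
    have h1 : ∫ x in K, (1:ℝ) = (volume K).toReal := by
      rw [setIntegral_const]; simp; rfl
    rw [← h1, hCOV (fun _ => (1:ℝ)), hvolΔ]
  rw [hmain, hvolK]
  rw [choose_two_real k]
  have h1 : ((k:ℝ)+1) ≠ 0 := by positivity
  have h2 : ((k:ℝ)+2) ≠ 0 := by positivity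
  field_simp
end
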